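/- Assume f satisfies (f1) and (f2) with constant B ∈ [1,∞), and for ρ > 1 let φ(ρ) be the unique value > s₀ with F(φ(ρ)) = (B/4)·ρ·e^{−ρ+1}. Then for every σ > 0: φ(ρ) / (ρ−1)^{1 − 1/B + σ} → 0 as ρ → ∞. -/

import Mathlib

open MeasureTheory Filter
open Topology

/-- `Fint f s = ∫_s^∞ dτ / f(τ)`. -/
noncomputable def Fint (f : ℝ → ℝ) (s : ℝ) : ℝ := ∫ τ in Set.Ioi s, 1 / f τ

/-- `1/B₁[f](s) = (−log F(s))·(1 − f'(s)·F(s))`, with `G` playing the role of `F`. -/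
noncomputable def invB1 (f G : ℝ → ℝ) (s : ℝ) : ℝ :=
  (-Real.log (G s)) * (1 - deriv f s * G s)

/-- `1/B₂[f](s) = f'(s)·F(s)·(log F(s))²·(f(s)·f''(s)·F(s)/f'(s) − 1)`,
with `G` playing the role of `F`. -/
noncomputable def invB2 (f G : ℝ → ℝ) (s : ℝ) : ℝ :=
  deriv f s * G s * (Real.log (G s)) ^ 2 *
    (f s * deriv (deriv f) s * G s / deriv f s - 1)

/-- The model singular solution `v`. -/
noncomputable def modelv (B t : ℝ) : ℝ :=
  if B = 1 then Real.log (-2 * Real.log t) else (-2 * Real.log t) ^ ((B - 1) / B)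

/-- The model nonlinearity `g`. -/
noncomputable def modelg (B s : ℝ) : ℝ :=
  if B = 1 then 4 * Real.exp (Real.exp s - 2 * s)
  else (4 / (B * (B / (B - 1)))) * s ^ (1 - 2 * (B / (B - 1))) * Real.exp (s ^ (B / (B - 1)))

/-- The model function `G(s) = ∫_s^∞ dτ/g(τ)` in closed form. -/
noncomputable def modelG (B s : ℝ) : ℝ :=
  if B = 1 then (1 / 4) * (Real.exp s + 1) * Real.exp (-Real.exp s)
  else (B / 4) * (s ^ (B / (B - 1)) + 1) * Real.exp (-(s ^ (B / (B - 1))))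

/-- The Emden–Fowler model profile `ψ`. -/
noncomputable def modelpsi (B ρ : ℝ) : ℝ :=
  if B = 1 then Real.log (ρ - 1) else (ρ - 1) ^ ((B - 1) / B)

lemma Fint_decomp (f : ℝ → ℝ) {s₀ y x : ℝ}
    (hfint : ∀ s, s₀ < s → IntegrableOn (fun τ => 1 / f τ) (Set.Ioi s))
    (hy : s₀ < y) (hyx : y ≤ x) :
    Fint f y = (∫ τ in Set.Ioc y x, 1 / f τ) + Fint f x := by
  have h1 : IntegrableOn (fun τ => 1 / f τ) (Set.Ioc y x) :=
    (hfint y hy).mono_set Set.Ioc_subset_Ioi_self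
  have h2 : IntegrableOn (fun τ => 1 / f τ) (Set.Ioi x) :=
    (hfint y hy).mono_set (Set.Ioi_subset_Ioi hyx)
  rw [Fint, ← Set.Ioc_union_Ioi_eq_Ioi hyx,
    MeasureTheory.setIntegral_union (Set.Ioc_disjoint_Ioi le_rfl) measurableSet_Ioi h1 h2]
  rfl

lemma Fint_contOn (f : ℝ → ℝ) {s₀ : ℝ} (hf : ContinuousOn f (Set.Ioi s₀))
    (hfpos : ∀ s, s₀ < s → 0 < f s) :
    ContinuousOn (fun τ => 1 / f τ) (Set.Ioi s₀) :=
  continuousOn_const.div hf (fun s hs => (hfpos s hs).ne')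

lemma Fint_hasDerivAt (f : ℝ → ℝ) {s₀ s : ℝ}
    (hf : ContinuousOn f (Set.Ioi s₀))
    (hfpos : ∀ s, s₀ < s → 0 < f s)
    (hfint : ∀ s, s₀ < s → IntegrableOn (fun τ => 1 / f τ) (Set.Ioi s))
    (hs : s₀ < s) :
    HasDerivAt (Fint f) (-(1 / f s)) s := by
  set y := (s₀ + s) / 2 with hy_def
  have hy : s₀ < y := by simp only [hy_def]; linarith
  have hys : y < s := by simp only [hy_def]; linarith
  have hcont := Fint_contOn f hf hfpos
  have key : ∀ x ∈ Set.Ioi y, Fint f x = Fint f y - ∫ τ in y..x, 1 / f τ := by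
    intro x hx
    rw [intervalIntegral.integral_of_le (le_of_lt hx),
      Fint_decomp f hfint hy (le_of_lt hx)]
    ring
  have hint : IntervalIntegrable (fun τ => 1 / f τ) volume y s := by
    apply ContinuousOn.intervalIntegrable
    apply hcont.mono
    rw [Set.uIcc_of_le (le_of_lt hys)]
    intro t ht
    exact lt_of_lt_of_le hy ht.1
  have hmeas : StronglyMeasurableAtFilter (fun τ => 1 / f τ) (𝓝 s) :=
    ⟨Set.Ioi s₀, Ioi_mem_nhds hs, (hcont.aestronglyMeasurable measurableSet_Ioi)⟩
  have hca : ContinuousAt (fun τ => 1 / f τ) s :=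
    (hcont.continuousAt (Ioi_mem_nhds hs))
  have hd : HasDerivAt (fun x => Fint f y - ∫ τ in y..x, 1 / f τ) (-(1 / f s)) s :=
    ((intervalIntegral.integral_hasDerivAt_right hint hmeas hca).const_sub _)
  apply hd.congr_of_eventuallyEq
  filter_upwards [Ioi_mem_nhds hys] with x hx
  exact key x hx

lemma Fint_nonneg (f : ℝ → ℝ) {s₀ s : ℝ}
    (hfpos : ∀ s, s₀ < s → 0 < f s) (hs : s₀ ≤ s) : 0 ≤ Fint f s := by
  apply MeasureTheory.setIntegral_nonneg measurableSet_Ioi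
  intro t ht
  have := hfpos t (lt_of_le_of_lt hs ht)
  positivity

lemma Fint_pos (f : ℝ → ℝ) {s₀ s : ℝ}
    (hf : ContinuousOn f (Set.Ioi s₀))
    (hfpos : ∀ s, s₀ < s → 0 < f s)
    (hfint : ∀ s, s₀ < s → IntegrableOn (fun τ => 1 / f τ) (Set.Ioi s))
    (hs : s₀ < s) : 0 < Fint f s := by
  rw [Fint_decomp f hfint hs (le_of_lt (lt_add_one s))]
  have h1 : 0 < ∫ τ in Set.Ioc s (s+1), 1 / f τ := by
    rw [← intervalIntegral.integral_of_le (le_of_lt (lt_add_one s))]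
    apply intervalIntegral.intervalIntegral_pos_of_pos_on
    · apply ContinuousOn.intervalIntegrable
      apply (Fint_contOn f hf hfpos).mono
      rw [Set.uIcc_of_le (le_of_lt (lt_add_one s))]
      intro t ht; exact lt_of_lt_of_le hs ht.1
    · intro t ht
      have := hfpos t (lt_trans hs ht.1)
      positivity
    · exact lt_add_one s
  have h2 : 0 ≤ Fint f (s + 1) := Fint_nonneg f hfpos (by linarith)
  linarith

lemma Fint_anti (f : ℝ → ℝ) {s₀ y x : ℝ}
    (hfpos : ∀ s, s₀ < s → 0 < f s)
    (hfint : ∀ s, s₀ < s → IntegrableOn (fun τ => 1 / f τ) (Set.Ioi s))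
    (hy : s₀ < y) (hyx : y ≤ x) : Fint f x ≤ Fint f y := by
  rw [Fint_decomp f hfint hy hyx]
  have : 0 ≤ ∫ τ in Set.Ioc y x, 1 / f τ := by
    apply MeasureTheory.setIntegral_nonneg measurableSet_Ioc
    intro t ht
    have := hfpos t (lt_of_lt_of_le hy (le_of_lt ht.1))
    positivity
  linarith

lemma Fint_tendsto_zero (f : ℝ → ℝ) {s₀ : ℝ}
    (hfint : ∀ s, s₀ < s → IntegrableOn (fun τ => 1 / f τ) (Set.Ioi s)) :
    Tendsto (Fint f) atTop (𝓝 0) := by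
  have ha : s₀ < s₀ + 1 := lt_add_one s₀
  have h := MeasureTheory.intervalIntegral_tendsto_integral_Ioi (s₀ + 1)
    (hfint (s₀+1) ha) tendsto_id
  have h2 : Tendsto (fun x => Fint f (s₀+1) - ∫ τ in (s₀+1)..x, 1 / f τ) atTop
      (𝓝 (Fint f (s₀+1) - Fint f (s₀+1))) := tendsto_const_nhds.sub h
  rw [sub_self] at h2
  apply h2.congr'
  filter_upwards [eventually_ge_atTop (s₀+1)] with x hx
  rw [intervalIntegral.integral_of_le hx, Fint_decomp f hfint ha hx]
  ring

lemma tendsto_sub_one_rpow {γ : ℝ} (h : 0 < γ) :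
    Tendsto (fun ρ : ℝ => (ρ - 1) ^ γ) atTop atTop := by
  apply (tendsto_rpow_atTop h).comp
  exact tendsto_atTop_add_const_right atTop (-1) tendsto_id


set_option maxHeartbeats 1000000 in
/-- Growth estimate for the singular profile: for every `σ > 0`,
`φ(ρ) / (ρ−1)^{1−1/B+σ} → 0` as `ρ → ∞`. -/
theorem stmt11 (f φ : ℝ → ℝ) (s₀ B : ℝ) (hs₀ : 0 < s₀)
    (hf : ContDiffOn ℝ 2 f (Set.Ioi s₀))
    (hfpos : ∀ s, s₀ < s → 0 < f s)
    (hf' : ∀ s, s₀ < s → 0 < deriv f s)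
    (hfint : ∀ s, s₀ < s → IntegrableOn (fun τ => 1 / f τ) (Set.Ioi s))
    (hB : 1 ≤ B)
    (hf2a : Tendsto (fun s => deriv f s * Fint f s) atTop (nhds 1))
    (hf2b : Tendsto (fun s => invB2 f (Fint f) s) atTop (nhds (1 / B)))
    (hφ : ∀ ρ > (1 : ℝ), s₀ < φ ρ ∧ Fint f (φ ρ) = (B / 4) * ρ * Real.exp (-ρ + 1)) :
    ∀ σ > (0 : ℝ),
      Tendsto (fun ρ => φ ρ / (ρ - 1) ^ (1 - 1 / B + σ)) atTop (nhds 0) := by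
  intro σ hσ
  have hB0 : 0 < B := lt_of_lt_of_le one_pos hB
  -- basic facts about F
  have hfc : ContinuousOn f (Set.Ioi s₀) := hf.continuousOn
  have hFd : ∀ s, s₀ < s → HasDerivAt (Fint f) (-(1 / f s)) s :=
    fun s hs => Fint_hasDerivAt f hfc hfpos hfint hs
  have hFpos : ∀ s, s₀ < s → 0 < Fint f s := fun s hs => Fint_pos f hfc hfpos hfint hs
  have hFtend : Tendsto (Fint f) atTop (𝓝 0) := Fint_tendsto_zero f hfint
  -- derivatives of f
  have h2 : ContDiffOn ℝ (1+1) f (Set.Ioi s₀) := by norm_num; exact hf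
  have hcd := (contDiffOn_succ_iff_deriv_of_isOpen isOpen_Ioi).mp h2
  have hfd : ∀ s, s₀ < s → HasDerivAt f (deriv f s) s :=
    fun s hs => (hcd.1.differentiableAt (Ioi_mem_nhds hs)).hasDerivAt
  have hfd2 : ∀ s, s₀ < s → HasDerivAt (deriv f) (deriv (deriv f) s) s :=
    fun s hs => ((hcd.2.2.differentiableOn one_ne_zero).differentiableAt (Ioi_mem_nhds hs)).hasDerivAt
  -- the functions L, l, u
  set L : ℝ → ℝ := fun s => -Real.log (Fint f s) with hL_def
  set l : ℝ → ℝ := fun s => 1 / (f s * Fint f s) with hl_def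
  set u : ℝ → ℝ := fun s => deriv f s * Fint f s with hu_def
  have hlpos : ∀ s, s₀ < s → 0 < l s := by
    intro s hs
    have h1 := hfpos s hs; have h2 := hFpos s hs
    simp only [hl_def]; positivity
  have hLd : ∀ s, s₀ < s → HasDerivAt L (l s) s := by
    intro s hs
    have h := ((hFd s hs).log (hFpos s hs).ne').neg
    refine h.congr_deriv (Eq.symm ?_)
    have h1 := (hfpos s hs).ne'
    have h2 := (hFpos s hs).ne'
    simp only [hl_def]
    field_simp
  -- L is monotone
  have hLmono : ∀ y x, s₀ < y → y ≤ x → L y ≤ L x := by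
    intro y x hy hyx
    have := Real.log_le_log (hFpos x (lt_of_lt_of_le hy hyx)) (Fint_anti f hfpos hfint hy hyx)
    simp only [hL_def]
    linarith
  -- L tends to infinity
  have hLtop : Tendsto L atTop atTop := by
    have h1 : Tendsto (Fint f) atTop (𝓝[>] 0) := by
      apply tendsto_nhdsWithin_of_tendsto_nhds_of_eventually_within _ hFtend
      filter_upwards [eventually_gt_atTop s₀] with s hs
      exact hFpos s hs
    have h2 : Tendsto (fun s => Real.log (Fint f s)) atTop atBot :=
      Real.tendsto_log_nhdsGT_zero.comp h1
    simpa only [hL_def, Function.comp_def] using tendsto_neg_atBot_atTop.comp h2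
  -- parameters
  set ε' : ℝ := min (σ/2) (1/(2*B)) with hε'_def
  have hε'pos : 0 < ε' := lt_min (by linarith) (by positivity)
  have hε'le : ε' ≤ σ/2 := min_le_left _ _
  have hε'le2 : ε' ≤ 1/(2*B) := min_le_right _ _
  set q : ℝ := 1/B - ε' with hq_def
  have hq0 : 0 < q := by
    have : 1/(2*B) < 1/B := by
      rw [div_lt_div_iff₀ (by positivity) hB0]; linarith
    simp only [hq_def]; linarith
  have hqltB : q < 1/B := by simp only [hq_def]; linarith
  have hq1 : q < 1 := lt_of_lt_of_le hqltB (by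
    rw [div_le_one hB0]; exact hB)
  have hγ0 : 0 < 1 - q := by linarith
  -- choose s₁
  have hev : ∀ᶠ s in atTop, s₀ < s ∧ Fint f s < Real.exp (-1) ∧ q ≤ invB2 f (Fint f) s := by
    have e1 : ∀ᶠ s in atTop, s₀ < s := eventually_gt_atTop s₀
    have e2 : ∀ᶠ s in atTop, Fint f s < Real.exp (-1) :=
      hFtend.eventually (eventually_lt_nhds (Real.exp_pos _))
    have e3 : ∀ᶠ s in atTop, q ≤ invB2 f (Fint f) s :=
      hf2b.eventually (eventually_ge_nhds hqltB)
    exact e1.and (e2.and e3)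
  obtain ⟨s₁', hs₁'⟩ := eventually_atTop.mp hev
  set s₁ : ℝ := max s₁' (s₀ + 1) with hs₁_def
  have hs₁prop : ∀ s, s₁ ≤ s → s₀ < s ∧ Fint f s < Real.exp (-1) ∧ q ≤ invB2 f (Fint f) s :=
    fun s hs => hs₁' s (le_trans (le_max_left _ _) hs)
  have hs₁gt : s₀ < s₁ := lt_of_lt_of_le (lt_add_one s₀) (le_max_right _ _)
  have hs₁pos : 0 < s₁ := lt_trans hs₀ hs₁gt
  have hLgt1 : ∀ s, s₁ ≤ s → 1 < L s := by
    intro s hs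
    have h1 := (hs₁prop s hs).2.1
    have h2 := hFpos s (hs₁prop s hs).1
    have := Real.log_lt_log h2 h1
    rw [Real.log_exp] at this
    simp only [hL_def]; linarith
  have hLpos : ∀ s, s₁ ≤ s → 0 < L s := fun s hs => lt_trans one_pos (hLgt1 s hs)
  -- derivative of u in terms of invB2
  have hud : ∀ s, s₁ ≤ s → HasDerivAt u (invB2 f (Fint f) s * l s / (L s)^2) s := by
    intro s hs
    obtain ⟨hs0, hFe, _⟩ := hs₁prop s hs
    have h := (hfd2 s hs0).mul (hFd s hs0)
    refine h.congr_deriv (Eq.symm ?_)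
    have h1 := (hfpos s hs0).ne'
    have h2 := (hFpos s hs0).ne'
    have h3 := (hf' s hs0).ne'
    have h4 : Real.log (Fint f s) ≠ 0 := by
      have := Real.log_lt_log (hFpos s hs0) hFe
      rw [Real.log_exp] at this
      linarith
    have h5 : L s = -Real.log (Fint f s) := rfl
    simp only [hl_def, invB2, h5]
    field_simp
    ring
  -- w := u + q / L is monotone on [s₁, ∞) and tends to 1, hence u ≤ 1 - q/L
  set w : ℝ → ℝ := fun s => u s + q * (L s)⁻¹ with hw_def
  have hwd : ∀ s, s₁ ≤ s → HasDerivAt w ((invB2 f (Fint f) s - q) * (l s / (L s)^2)) s := by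
    intro s hs
    have h1 : HasDerivAt (fun s => (L s)⁻¹) (-(l s) / (L s)^2) s :=
      (hLd s (hs₁prop s hs).1).inv (hLpos s hs).ne'
    have h := (hud s hs).add (h1.const_mul q)
    refine h.congr_deriv (Eq.symm ?_)
    ring
  have hwmono : MonotoneOn w (Set.Ici s₁) := by
    apply monotoneOn_of_deriv_nonneg (convex_Ici s₁)
    · intro s hs
      exact (hwd s hs).continuousAt.continuousWithinAt
    · intro s hs
      rw [interior_Ici] at hs
      exact (hwd s (le_of_lt hs)).differentiableAt.differentiableWithinAt
    · intro s hs
      rw [interior_Ici] at hs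
      rw [(hwd s (le_of_lt hs)).deriv]
      have h1 := (hs₁prop s (le_of_lt hs)).2.2
      have h2 := hlpos s (hs₁prop s (le_of_lt hs)).1
      have h3 := hLpos s (le_of_lt hs)
      apply mul_nonneg (by linarith) (by positivity)
  have hwtend : Tendsto w atTop (𝓝 1) := by
    have h1 : Tendsto (fun s => q * (L s)⁻¹) atTop (𝓝 (q * 0)) :=
      (tendsto_inv_atTop_zero.comp hLtop).const_mul q
    have h2 := hf2a.add h1
    rw [mul_zero, add_zero] at h2
    exact h2
  have hule : ∀ s, s₁ ≤ s → u s + q * (L s)⁻¹ ≤ 1 := by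
    intro s hs
    apply ge_of_tendsto hwtend
    filter_upwards [eventually_ge_atTop s] with t ht
    exact hwmono hs (le_trans hs ht) ht
  -- M := -log(f·F) - q·log L is monotone on [s₁, ∞)
  set M : ℝ → ℝ := fun s => -Real.log (f s * Fint f s) - q * Real.log (L s) with hM_def
  have hMd : ∀ s, s₁ ≤ s → HasDerivAt M ((1 - u s) * l s - q * (l s / L s)) s := by
    intro s hs
    have hs0 := (hs₁prop s hs).1
    have h1 := (hfpos s hs0).ne'
    have h2 := (hFpos s hs0).ne'
    have hfF : f s * Fint f s ≠ 0 := mul_ne_zero h1 h2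
    have ha : HasDerivAt (fun s => -Real.log (f s * Fint f s))
        ((1 - u s) * l s) s := by
      have h := (((hfd s hs0).mul (hFd s hs0)).log hfF).neg
      refine h.congr_deriv (Eq.symm ?_)
      simp only [hl_def, hu_def, Pi.mul_apply]
      field_simp
      ring
    have hb : HasDerivAt (fun s => q * Real.log (L s)) (q * (l s / L s)) s :=
      ((hLd s hs0).log (hLpos s hs).ne').const_mul q
    exact ha.sub hb
  have hMmono : MonotoneOn M (Set.Ici s₁) := by
    apply monotoneOn_of_deriv_nonneg (convex_Ici s₁)
    · intro s hs
      exact (hMd s hs).continuousAt.continuousWithinAt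
    · intro s hs
      rw [interior_Ici] at hs
      exact (hMd s (le_of_lt hs)).differentiableAt.differentiableWithinAt
    · intro s hs
      rw [interior_Ici] at hs
      rw [(hMd s (le_of_lt hs)).deriv]
      have h1 := hule s (le_of_lt hs)
      have h2 := hlpos s (hs₁prop s (le_of_lt hs)).1
      have h3 := hLpos s (le_of_lt hs)
      have h4 : q * (L s)⁻¹ ≤ 1 - u s := by linarith
      have : (1 - u s) * l s - q * (l s / L s) = ((1 - u s) - q * (L s)⁻¹) * l s := by
        field_simp
      rw [this]
      apply mul_nonneg (by linarith) (le_of_lt h2)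
  -- lower bound for l
  set C : ℝ := M s₁ with hC_def
  have hl_ge : ∀ s, s₁ ≤ s → Real.exp C * (L s) ^ q ≤ l s := by
    intro s hs
    have hs0 := (hs₁prop s hs).1
    have hfF : 0 < f s * Fint f s := mul_pos (hfpos s hs0) (hFpos s hs0)
    have hMge : C ≤ M s := hMmono (Set.self_mem_Ici) hs hs
    have h1 : C + q * Real.log (L s) ≤ -Real.log (f s * Fint f s) := by
      simp only [hM_def] at hMge; linarith
    have h2 : Real.exp (C + q * Real.log (L s)) ≤ Real.exp (-Real.log (f s * Fint f s)) :=
      Real.exp_le_exp.mpr h1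
    rw [Real.exp_add, Real.exp_neg, Real.exp_log hfF] at h2
    rw [← one_div] at h2
    calc Real.exp C * (L s) ^ q
        = Real.exp C * Real.exp (q * Real.log (L s)) := by
          rw [Real.rpow_def_of_pos (hLpos s hs)]; ring_nf
      _ ≤ l s := h2
  -- linear growth of L^(1-q)
  set c : ℝ := (1 - q) * Real.exp C with hc_def
  have hcpos : 0 < c := by simp only [hc_def]; positivity
  set R : ℝ → ℝ := fun s => (L s) ^ (1-q) - c * s with hR_def
  have hRd : ∀ s, s₁ ≤ s → HasDerivAt R (l s * (1-q) * (L s) ^ (1-q-1) - c) s := by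
    intro s hs
    have h1 : HasDerivAt (fun s => (L s) ^ (1-q)) (l s * (1-q) * (L s) ^ (1-q-1)) s :=
      (hLd s (hs₁prop s hs).1).rpow_const (Or.inl (hLpos s hs).ne')
    have h2 : HasDerivAt (fun s => c * s) c s := by
      simpa using (hasDerivAt_id s).const_mul c
    exact h1.sub h2
  have hRmono : MonotoneOn R (Set.Ici s₁) := by
    apply monotoneOn_of_deriv_nonneg (convex_Ici s₁)
    · intro s hs
      exact (hRd s hs).continuousAt.continuousWithinAt
    · intro s hs
      rw [interior_Ici] at hs
      exact (hRd s (le_of_lt hs)).differentiableAt.differentiableWithinAt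
    · intro s hs
      rw [interior_Ici] at hs
      rw [(hRd s (le_of_lt hs)).deriv]
      have hs' := le_of_lt (show s₁ < s from hs)
      have h1 := hl_ge s hs'
      have h2 := hLpos s hs'
      have key : c ≤ l s * (1-q) * (L s) ^ (1-q-1) := by
        have h3 : Real.exp C * (L s) ^ q * (1-q) * (L s) ^ (1-q-1)
            ≤ l s * (1-q) * (L s) ^ (1-q-1) := by
          apply mul_le_mul_of_nonneg_right _ (Real.rpow_nonneg (le_of_lt h2) _)
          exact mul_le_mul_of_nonneg_right h1 (le_of_lt hγ0)
        calc c = Real.exp C * (1-q) * (L s) ^ (q + (1-q-1)) := by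
              have : q + (1-q-1) = 0 := by ring
              rw [this, Real.rpow_zero, hc_def]; ring
          _ = Real.exp C * (L s) ^ q * (1-q) * (L s) ^ (1-q-1) := by
              rw [Real.rpow_add h2]; ring
          _ ≤ l s * (1-q) * (L s) ^ (1-q-1) := h3
      linarith
  have hLlow : ∀ s, s₁ ≤ s → c * (s - s₁) ≤ (L s) ^ (1-q) := by
    intro s hs
    have h1 : R s₁ ≤ R s := hRmono Set.self_mem_Ici hs hs
    have h2 : 0 ≤ (L s₁) ^ (1-q) := Real.rpow_nonneg (le_of_lt (hLpos s₁ le_rfl)) _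
    simp only [hR_def] at h1
    nlinarith
  have hLlow2 : ∀ s, s₁ ≤ s → (c * (s - s₁)) ^ (1/(1-q)) ≤ L s := by
    intro s hs
    have h0 : 0 ≤ c * (s - s₁) := mul_nonneg (le_of_lt hcpos) (by linarith)
    have h1 := Real.rpow_le_rpow h0 (hLlow s hs) (by positivity : (0:ℝ) ≤ 1/(1-q))
    rwa [← Real.rpow_mul (le_of_lt (hLpos s hs)),
      mul_one_div_cancel hγ0.ne', Real.rpow_one] at h1
  -- final assembly
  set γ' : ℝ := 1 - 1/B + 3*σ/4 with hγ'_def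
  have h1B : 1/B ≤ 1 := by rw [div_le_one hB0]; exact hB
  have hγ'0 : 0 < γ' := by simp only [hγ'_def]; linarith
  set m : ℝ := γ' / (1-q) with hm_def
  have hγltγ' : 1 - q < γ' := by
    simp only [hγ'_def, hq_def]; linarith
  have hm1 : 1 < m := (one_lt_div hγ0).mpr hγltγ'
  set K : ℝ := (c/2) ^ (1/(1-q)) with hK_def
  have hKpos : 0 < K := Real.rpow_pos_of_pos (by linarith) _
  -- key eventual bound
  have hkey : ∀ᶠ ρ in atTop, φ ρ ≤ (ρ-1) ^ γ' := by
    filter_upwards [eventually_gt_atTop 1, eventually_ge_atTop 2,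
      (tendsto_sub_one_rpow hγ'0).eventually_ge_atTop (2*s₁),
      (tendsto_sub_one_rpow (by linarith : (0:ℝ) < m - 1)).eventually_ge_atTop (2/K),
      eventually_ge_atTop (4/B)] with ρ h1 h2 h3 h4 h5
    by_contra hcon
    push_neg at hcon
    set x : ℝ := (ρ-1) ^ γ' with hx_def
    have hρ10 : 0 < ρ - 1 := by linarith
    have hxs₁ : s₁ ≤ x := by linarith
    have hxs₀ : s₀ < x := lt_of_lt_of_le hs₁gt hxs₁
    obtain ⟨hφs, hφF⟩ := hφ ρ h1
    have hBρpos : 0 < B/4*ρ := by positivity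
    have hBρ1 : 1 ≤ B/4*ρ := by
      have h6 : B/4 * (4/B) ≤ B/4 * ρ :=
        mul_le_mul_of_nonneg_left h5 (by positivity)
      have h7 : B/4 * (4/B) = 1 := by field_simp
      linarith
    have hLφ : L (φ ρ) = ρ - 1 - Real.log (B/4*ρ) := by
      simp only [hL_def]
      rw [hφF, Real.log_mul (ne_of_gt hBρpos) (Real.exp_ne_zero _), Real.log_exp]
      ring
    have hLφle : L (φ ρ) ≤ ρ - 1 := by
      have h20 := Real.log_nonneg hBρ1
      rw [hLφ]
      linarith
    have chain1 : L x ≤ L (φ ρ) := hLmono x (φ ρ) hxs₀ (le_of_lt hcon)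
    have chain2 : (c * (x - s₁)) ^ (1/(1-q)) ≤ L x := hLlow2 x hxs₁
    have chain3 : K * (ρ-1) ^ m ≤ (c * (x - s₁)) ^ (1/(1-q)) := by
      have hxhalf : c/2 * x ≤ c * (x - s₁) := by
        have h8 : c * s₁ ≤ c * (x/2) :=
          mul_le_mul_of_nonneg_left (by linarith) (le_of_lt hcpos)
        have h9 : c * (x - s₁) = c * x - c * s₁ := by ring
        have h10 : c * (x/2) = c/2 * x := by ring
        linarith
      have h0 : (0:ℝ) ≤ c/2 * x := by positivity
      have hstep := Real.rpow_le_rpow h0 hxhalf (by positivity : (0:ℝ) ≤ 1/(1-q))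
      calc K * (ρ-1) ^ m = (c/2 * x) ^ (1/(1-q)) := by
            rw [Real.mul_rpow (by linarith : (0:ℝ) ≤ c/2) (by positivity : (0:ℝ) ≤ x),
              hx_def, ← Real.rpow_mul (le_of_lt hρ10), mul_one_div]
        _ ≤ (c * (x - s₁)) ^ (1/(1-q)) := hstep
    have chain4 : 2 * (ρ-1) ≤ K * (ρ-1) ^ m := by
      have hsplit : (ρ-1) ^ m = (ρ-1) ^ (m-1) * (ρ-1) := by
        have h14 : (ρ-1) ^ (m-1) * (ρ-1) ^ (1:ℝ) = (ρ-1) ^ m := by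
          rw [← Real.rpow_add hρ10]; norm_num
        rw [← h14, Real.rpow_one]
      have hK2 : 2 ≤ K * (ρ-1) ^ (m-1) := by
        have h11 := mul_le_mul_of_nonneg_left h4 (le_of_lt hKpos)
        have hKK : K * (2/K) = 2 := by field_simp
        rw [hKK] at h11
        exact h11
      have h12 := mul_le_mul_of_nonneg_right hK2 (le_of_lt hρ10)
      rw [hsplit]
      have h13 : K * (ρ-1) ^ (m-1) * (ρ-1) = K * ((ρ-1) ^ (m-1) * (ρ-1)) := by ring
      linarith
    have hfinal : ρ ≤ ρ - 1 :=
      le_trans (by linarith) (le_trans chain4 (le_trans chain3 (le_trans chain2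
        (le_trans chain1 hLφle))))
    linarith
  -- squeeze
  apply squeeze_zero' (g := fun ρ => (ρ-1) ^ γ' / (ρ-1) ^ (1 - 1/B + σ))
  · filter_upwards [eventually_gt_atTop 1] with ρ hρ
    exact div_nonneg (le_of_lt (lt_trans hs₀ (hφ ρ hρ).1))
      (Real.rpow_nonneg (by linarith) _)
  · filter_upwards [hkey, eventually_gt_atTop 1] with ρ hk hρ
    exact (div_le_div_iff_of_pos_right (Real.rpow_pos_of_pos (by linarith) _)).mpr hk
  · have h0 : Tendsto (fun ρ : ℝ => (ρ-1) ^ (γ' - (1 - 1/B + σ))) atTop (𝓝 0) := by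
      have he : γ' - (1 - 1/B + σ) = -(σ/4) := by simp only [hγ'_def]; ring
      rw [he]
      exact (tendsto_rpow_neg_atTop (by linarith)).comp
        (tendsto_atTop_add_const_right atTop (-1) tendsto_id)
    apply h0.congr'
    filter_upwards [eventually_gt_atTop 1] with ρ hρ
    rw [Real.rpow_sub (by linarith : (0:ℝ) < ρ - 1)]
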